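/- Write α = r cos θ, β = r sin θ with r > 0, θ ∈ (0, π/2), and define h̃_{(r,θ)}(z) = 2e^{2iθ}cos θ / (e^{−r cos θ · z}(cos θ + 1) − sin θ). Then lim_{θ→0⁺} h̃_{(r,θ)}(z) = e^{r z} for every z ∈ ℂ, and lim_{θ→π/2⁻} h̃_{(r,θ)}(z) = 2/(r z − 1) for every z with r z ≠ 1. -/

import Mathlib

open Filter Topology Complex

/-- The Weierstrass data h̃_{(r,θ)}(z) = 2e^{2iθ}cosθ / (e^{−r cosθ z}(cosθ+1) − sinθ)
interpolates between the catenoid data e^{rz} (θ → 0⁺) and the Enneper-type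
data 2/(rz − 1) (θ → (π/2)⁻). -/
theorem stmt_18 (r : ℝ) (hr : 0 < r)
    (h : ℝ → ℂ → ℂ)
    (hh : ∀ θ : ℝ, ∀ z : ℂ, h θ z
      = 2 * Complex.exp (2 * Complex.I * (θ : ℂ)) * (Real.cos θ : ℂ)
        / (Complex.exp (-((r : ℂ) * (Real.cos θ : ℂ)) * z) * ((Real.cos θ : ℂ) + 1)
            - (Real.sin θ : ℂ))) :
    (∀ z : ℂ,
      Tendsto (fun θ : ℝ => h θ z) (𝓝[>] 0) (𝓝 (Complex.exp ((r : ℂ) * z)))) ∧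
    (∀ z : ℂ, (r : ℂ) * z ≠ 1 →
      Tendsto (fun θ : ℝ => h θ z) (𝓝[<] (Real.pi / 2))
        (𝓝 (2 / ((r : ℂ) * z - 1)))) := by
  constructor
  · intro z
    have tnum : Tendsto (fun θ : ℝ => 2 * Complex.exp (2 * Complex.I * (θ : ℂ)) * (Real.cos θ : ℂ))
        (𝓝[>] (0:ℝ)) (𝓝 2) := by
      have hcont : ContinuousAt (fun θ : ℝ =>
          2 * Complex.exp (2 * Complex.I * (θ : ℂ)) * (Real.cos θ : ℂ)) 0 := by fun_prop
      have := hcont.tendsto.mono_left (nhdsWithin_le_nhds (s := Set.Ioi (0:ℝ)))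
      simpa using this
    have tden : Tendsto (fun θ : ℝ =>
        Complex.exp (-((r : ℂ) * (Real.cos θ : ℂ)) * z) * ((Real.cos θ : ℂ) + 1)
            - (Real.sin θ : ℂ)) (𝓝[>] (0:ℝ)) (𝓝 (Complex.exp (-((r:ℂ)*z)) * (1+1))) := by
      have hcont : ContinuousAt (fun θ : ℝ =>
          Complex.exp (-((r : ℂ) * (Real.cos θ : ℂ)) * z) * ((Real.cos θ : ℂ) + 1)
            - (Real.sin θ : ℂ)) 0 := by fun_prop
      have := hcont.tendsto.mono_left (nhdsWithin_le_nhds (s := Set.Ioi (0:ℝ)))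
      simpa [mul_comm, mul_assoc] using this
    have hdne : Complex.exp (-((r:ℂ)*z)) * (1+1) ≠ 0 := by simp [Complex.exp_ne_zero]
    have T := tnum.div tden hdne
    have hval : (2:ℂ) / (Complex.exp (-((r:ℂ)*z)) * (1+1)) = Complex.exp ((r:ℂ)*z) := by
      rw [Complex.exp_neg]
      field_simp [Complex.exp_ne_zero]
      ring
    rw [hval] at T
    simp only [hh]
    exact T
  · intro z hz
    set w : ℂ := -((r:ℂ)*z) with hw
    have hpi : (0:ℝ) < Real.pi / 2 := by positivity
    have hev : ∀ᶠ θ in 𝓝[<] (Real.pi/2 : ℝ), θ ∈ Set.Ioo 0 (Real.pi/2) := by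
      filter_upwards [Ioo_mem_nhdsLT_of_mem (Set.mem_Ioc.mpr ⟨hpi, le_refl _⟩)] with θ hθ
      exact hθ
    have hcos : Tendsto Real.cos (𝓝[<] (Real.pi/2)) (𝓝[≠] (0:ℝ)) := by
      rw [tendsto_nhdsWithin_iff]
      constructor
      · have : Tendsto Real.cos (𝓝 (Real.pi/2)) (𝓝 (Real.cos (Real.pi/2))) :=
          Real.continuous_cos.continuousAt
        rw [Real.cos_pi_div_two] at this
        exact this.mono_left nhdsWithin_le_nhds
      · filter_upwards [hev] with θ hθ
        exact ne_of_gt (Real.cos_pos_of_mem_Ioo ⟨by linarith [hθ.1], hθ.2⟩)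
    have hF : HasDerivAt (fun u : ℂ => Complex.exp (w*u)) w 0 := by
      have h1 : HasDerivAt (fun u : ℂ => w * u) (w * 1) 0 := (hasDerivAt_id (0:ℂ)).const_mul w
      have h2 := (Complex.hasDerivAt_exp (w*0)).comp 0 h1
      simp only [mul_zero, Complex.exp_zero, one_mul, mul_one] at h2
      exact h2
    have hFR : HasDerivAt (fun t : ℝ => Complex.exp (w * (t:ℂ))) w 0 := by
      have : HasDerivAt (fun u : ℂ => Complex.exp (w*u)) w (((0:ℝ):ℂ)) := by simpa using hF
      exact this.comp_ofReal
    rw [hasDerivAt_iff_tendsto_slope] at hFR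
    have hsl : Tendsto (fun θ : ℝ => slope (fun t : ℝ => Complex.exp (w * (t:ℂ))) 0 (Real.cos θ))
        (𝓝[<] (Real.pi/2)) (𝓝 w) := hFR.comp hcos
    set D : ℝ → ℂ := fun θ => Complex.exp (w * (Real.cos θ : ℂ))
      + slope (fun t : ℝ => Complex.exp (w * (t:ℂ))) 0 (Real.cos θ)
      + ((Real.cos θ / (1 + Real.sin θ) : ℝ) : ℂ) with hD
    have hcos' : Tendsto Real.cos (𝓝[<] (Real.pi/2)) (𝓝 0) := hcos.mono_right nhdsWithin_le_nhds
    have t1 : Tendsto (fun θ : ℝ => Complex.exp (w * (Real.cos θ : ℂ)))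
        (𝓝[<] (Real.pi/2)) (𝓝 1) := by
      have hcont : ContinuousAt (fun x : ℝ => Complex.exp (w * (x:ℂ))) 0 := by fun_prop
      have := hcont.tendsto.comp hcos'
      simpa [Function.comp_def] using this
    have t3 : Tendsto (fun θ : ℝ => ((Real.cos θ / (1 + Real.sin θ) : ℝ) : ℂ))
        (𝓝[<] (Real.pi/2)) (𝓝 0) := by
      have hcont : ContinuousAt (fun θ : ℝ => Real.cos θ / (1 + Real.sin θ)) (Real.pi/2) := by
        apply ContinuousAt.div
        · fun_prop
        · fun_prop
        · rw [Real.sin_pi_div_two]; norm_num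
      have := (Complex.continuous_ofReal.continuousAt.comp hcont).tendsto.mono_left
        (nhdsWithin_le_nhds (s := Set.Iio (Real.pi/2)))
      simpa [Function.comp_def, Real.cos_pi_div_two, Real.sin_pi_div_two] using this
    have hDlim : Tendsto D (𝓝[<] (Real.pi/2)) (𝓝 (1 + w)) := by
      have := (t1.add hsl).add t3
      rw [hD]
      simpa using this
    have h1w : (1 : ℂ) + w ≠ 0 := by
      rw [hw]
      intro hcon
      exact hz (by linear_combination -hcon)
    have hnum : Tendsto (fun θ : ℝ => 2 * Complex.exp (2 * Complex.I * (θ : ℂ)))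
        (𝓝[<] (Real.pi/2)) (𝓝 (-2)) := by
      have hcont : ContinuousAt (fun θ : ℝ => 2 * Complex.exp (2 * Complex.I * (θ : ℂ)))
        (Real.pi/2) := by fun_prop
      have := hcont.tendsto.mono_left (nhdsWithin_le_nhds (s := Set.Iio (Real.pi/2)))
      have hval : 2 * Complex.exp (2 * Complex.I * (((Real.pi/2 : ℝ)) : ℂ)) = -2 := by
        rw [show 2 * Complex.I * (((Real.pi/2 : ℝ)) : ℂ) = (Real.pi : ℂ) * Complex.I by
          push_cast; ring]
        rw [Complex.exp_pi_mul_I]; ring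
      rwa [hval] at this
    have htot : Tendsto (fun θ : ℝ => 2 * Complex.exp (2 * Complex.I * (θ : ℂ)) / D θ)
        (𝓝[<] (Real.pi/2)) (𝓝 (2 / ((r:ℂ)*z - 1))) := by
      have hT := hnum.div hDlim h1w
      have hq : (-2 : ℂ) / (1 + w) = 2 / ((r:ℂ)*z - 1) := by
        rw [hw, show (1:ℂ) + -((r:ℂ)*z) = -((r:ℂ)*z - 1) by ring, div_neg, neg_div, neg_neg]
      rwa [hq] at hT
    refine Tendsto.congr' ?_ htot
    filter_upwards [hev] with θ hθ
    rw [hh]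
    have hcθ : Real.cos θ ≠ 0 :=
      ne_of_gt (Real.cos_pos_of_mem_Ioo ⟨by linarith [hθ.1], hθ.2⟩)
    have hsθ : (1:ℝ) + Real.sin θ ≠ 0 := by
      have := Real.sin_pos_of_pos_of_lt_pi hθ.1 (by linarith [hθ.2, Real.pi_pos])
      linarith
    have hcC : ((Real.cos θ : ℝ) : ℂ) ≠ 0 := Complex.ofReal_ne_zero.mpr hcθ
    have hsC : ((1 + Real.sin θ : ℝ) : ℂ) ≠ 0 := Complex.ofReal_ne_zero.mpr hsθ
    have hpy : ((Real.sin θ : ℂ))^2 + ((Real.cos θ : ℂ))^2 = 1 := by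
      exact_mod_cast congrArg (Complex.ofReal) (Real.sin_sq_add_cos_sq θ)
    have harg : -((r:ℂ) * (Real.cos θ : ℂ)) * z = w * (Real.cos θ : ℂ) := by rw [hw]; ring
    have hsC' : (1:ℂ) + (Real.sin θ:ℂ) ≠ 0 := by
      rw [show (1:ℂ) + (Real.sin θ:ℂ) = ((1 + Real.sin θ : ℝ) : ℂ) by push_cast; ring]
      exact hsC
    have hci : (Real.cos θ:ℂ) * ((Real.cos θ:ℂ))⁻¹ = 1 := mul_inv_cancel₀ hcC
    have hsi : ((1:ℂ)+(Real.sin θ:ℂ)) * ((1:ℂ)+(Real.sin θ:ℂ))⁻¹ = 1 := mul_inv_cancel₀ hsC'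
    have key : Complex.exp (-((r:ℂ) * (Real.cos θ : ℂ)) * z) * ((Real.cos θ : ℂ) + 1)
        - (Real.sin θ : ℂ) = (Real.cos θ : ℂ) * D θ := by
      rw [harg, hD]
      simp only [slope_def_module, sub_zero, Complex.real_smul, Complex.ofReal_inv,
        Complex.ofReal_zero, mul_zero, Complex.exp_zero, Complex.ofReal_div, Complex.ofReal_add,
        Complex.ofReal_one, Complex.ofReal_mul, div_eq_mul_inv]
      linear_combination (1 - Complex.exp (w*(Real.cos θ:ℂ))) * hci
        + ((Real.sin θ:ℂ) - 1) * hsi - ((1:ℂ)+(Real.sin θ:ℂ))⁻¹ * hpy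
    rw [key, show 2 * Complex.exp (2 * Complex.I * (θ : ℂ)) * ((Real.cos θ : ℝ) : ℂ)
      = ((Real.cos θ : ℝ) : ℂ) * (2 * Complex.exp (2 * Complex.I * (θ : ℂ))) from by ring,
      mul_div_mul_left _ _ hcC]
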